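/- Let A be a Hermitian d×d complex matrix (d ≥ 2) with eigenvalues a₁ < a₂ < ⋯ < a_d, and define φ_{i,j}(r) := (a_i + a_j)r − a_i a_j. Then the support of the pushforward of μ_d under the map ψ ↦ (⟨A⟩_ψ, ⟨A²⟩_ψ) equals ⋃_{k=1}^{d−1} F_{k,k+1}, where F_{k,k+1} := {(r,s) ∈ ℝ² : a_k ≤ r ≤ a_{k+1}, φ_{k,k+1}(r) ≤ s ≤ φ_{1,d}(r)}. Likewise, the support of the pushforward of μ_d under the map ψ ↦ (⟨A⟩_ψ, Δ_ψA) equals ⋃_{k=1}^{d−1} V_{k,k+1}, where V_{k,k+1} := {(r,x) ∈ ℝ² : a_k ≤ r ≤ a_{k+1}, √((a_{k+1}−r)(r−a_k)) ≤ x ≤ √((a_d−r)(r−a₁))}. -/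

import Mathlib

set_option maxHeartbeats 1000000

open Matrix MeasureTheory

/-- Expectation value `⟨A⟩_ψ = ⟨ψ, Aψ⟩` of the observable `A` in the pure state `ψ`. -/
noncomputable def expVal {d : ℕ} (A : Matrix (Fin d) (Fin d) ℂ)
    (ψ : EuclideanSpace ℂ (Fin d)) : ℝ :=
  ((star (fun i => ψ i) : Fin d → ℂ) ⬝ᵥ A.mulVec (fun i => ψ i)).re

/-- Standard deviation `Δ_ψ A = √(⟨ψ,A²ψ⟩ − ⟨ψ,Aψ⟩²)` in the pure state `ψ`. -/
noncomputable def devPure {d : ℕ} (A : Matrix (Fin d) (Fin d) ℂ)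
    (ψ : EuclideanSpace ℂ (Fin d)) : ℝ :=
  Real.sqrt (expVal (A * A) ψ - (expVal A ψ) ^ 2)

lemma expVal_eq_sum {d : ℕ} (B : Matrix (Fin d) (Fin d) ℂ)
    (b : OrthonormalBasis (Fin d) ℂ (EuclideanSpace ℂ (Fin d))) (w : Fin d → ℝ)
    (hb : ∀ i j, (B.mulVec (fun x => b i x)) j = (w i : ℂ) * b i j)
    (ψ : EuclideanSpace ℂ (Fin d)) :
    expVal B ψ = ∑ i, w i * ‖b.repr ψ i‖ ^ 2 := by
  have hb' : ∀ i, Matrix.toEuclideanLin B (b i) = (w i : ℂ) • b i := by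
    intro i
    apply PiLp.ext; intro j
    simp only [Matrix.toEuclideanLin_apply, PiLp.smul_apply, smul_eq_mul]
    exact hb i j
  have h1 : expVal B ψ = (inner ℂ ψ (Matrix.toEuclideanLin B ψ) : ℂ).re := by
    rw [EuclideanSpace.inner_eq_star_dotProduct, dotProduct_comm]
    rfl
  rw [h1]
  have h2 : Matrix.toEuclideanLin B ψ = ∑ i, (b.repr ψ i * (w i : ℂ)) • b i := by
    conv_lhs => rw [← b.sum_repr ψ, map_sum]
    refine Finset.sum_congr rfl fun i _ => ?_
    rw [LinearMap.map_smul, hb', smul_smul]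
  rw [h2, inner_sum, Complex.re_sum]
  refine Finset.sum_congr rfl fun i _ => ?_
  rw [inner_smul_right]
  have h3 : (inner ℂ ψ (b i) : ℂ) = starRingEnd ℂ (b.repr ψ i) := by
    rw [← inner_conj_symm, b.repr_apply_apply]
  rw [h3]
  have h4 : b.repr ψ i * (w i : ℂ) * starRingEnd ℂ (b.repr ψ i)
      = (w i : ℂ) * ((‖b.repr ψ i‖ : ℝ) ^ 2 : ℝ) := by
    rw [mul_comm (b.repr ψ i), mul_assoc, Complex.mul_conj]
    norm_cast
    simp [Complex.normSq_eq_norm_sq]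
  rw [h4]
  norm_cast

lemma continuous_expVal {d : ℕ} (B : Matrix (Fin d) (Fin d) ℂ) :
    Continuous fun ψ : EuclideanSpace ℂ (Fin d) => expVal B ψ := by
  have hp : ∀ i : Fin d, Continuous fun ψ : EuclideanSpace ℂ (Fin d) => ψ i :=
    fun i => (EuclideanSpace.proj i).continuous
  unfold expVal dotProduct Matrix.mulVec
  simp only [Pi.star_apply]
  refine Complex.continuous_re.comp ?_
  refine continuous_finset_sum _ fun i _ => ?_
  refine Continuous.mul (Continuous.star (hp i)) ?_
  exact continuous_finset_sum _ fun j _ => (continuous_const.mul (hp j))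

lemma exists_isometry_unit {d : ℕ} (hd : 1 ≤ d) (ψ₀ ψ₁ : EuclideanSpace ℂ (Fin d))
    (h0 : ‖ψ₀‖ = 1) (h1 : ‖ψ₁‖ = 1) :
    ∃ U : EuclideanSpace ℂ (Fin d) ≃ₗᵢ[ℂ] EuclideanSpace ℂ (Fin d), U ψ₀ = ψ₁ := by
  have hcard : Module.finrank ℂ (EuclideanSpace ℂ (Fin d)) = Fintype.card (Fin d) := by
    simp
  have horth : ∀ ψ : EuclideanSpace ℂ (Fin d), ‖ψ‖ = 1 →
      Orthonormal ℂ (({(⟨0, hd⟩ : Fin d)} : Set (Fin d)).restrict (fun _ => ψ)) := by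
    intro ψ hψ
    constructor
    · intro i; exact hψ
    · intro i j hij
      exact absurd (Subsingleton.elim i j) hij
  obtain ⟨b₀, hb₀⟩ := (horth ψ₀ h0).exists_orthonormalBasis_extension_of_card_eq hcard
  obtain ⟨b₁, hb₁⟩ := (horth ψ₁ h1).exists_orthonormalBasis_extension_of_card_eq hcard
  refine ⟨b₀.repr.trans b₁.repr.symm, ?_⟩
  have e0 : b₀ ⟨0, hd⟩ = ψ₀ := hb₀ _ rfl
  have e1 : b₁ ⟨0, hd⟩ = ψ₁ := hb₁ _ rfl
  rw [LinearIsometryEquiv.trans_apply, ← e0, ← e1]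
  rw [b₀.repr_self]
  rw [← b₁.repr_self ⟨0, hd⟩]
  exact b₁.repr.symm_apply_apply _

lemma open_pos {d : ℕ} (hd : 1 ≤ d)
    [MeasurableSpace (EuclideanSpace ℂ (Fin d))] [BorelSpace (EuclideanSpace ℂ (Fin d))]
    (μ : Measure (EuclideanSpace ℂ (Fin d))) [IsProbabilityMeasure μ]
    (hsph : μ {ψ | ‖ψ‖ = 1} = 1)
    (hinv : ∀ U : EuclideanSpace ℂ (Fin d) ≃ₗᵢ[ℂ] EuclideanSpace ℂ (Fin d),
      Measure.map (⇑U) μ = μ)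
    (G : Set (EuclideanSpace ℂ (Fin d))) (hG : IsOpen G)
    (ψ₀ : EuclideanSpace ℂ (Fin d)) (hψ₀G : ψ₀ ∈ G) (hψ₀ : ‖ψ₀‖ = 1) :
    0 < μ G := by
  set S : Set (EuclideanSpace ℂ (Fin d)) := {ψ | ‖ψ‖ = 1} with hS
  have hScompact : IsCompact S := by
    have : S = Metric.sphere (0 : EuclideanSpace ℂ (Fin d)) 1 := by
      ext ψ; simp [hS, mem_sphere_iff_norm]
    rw [this]
    exact isCompact_sphere 0 1
  have hchoice : ∀ ψ : EuclideanSpace ℂ (Fin d), ψ ∈ S →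
      ∃ U : EuclideanSpace ℂ (Fin d) ≃ₗᵢ[ℂ] EuclideanSpace ℂ (Fin d), U ψ₀ = ψ :=
    fun ψ hψ => exists_isometry_unit hd ψ₀ ψ hψ₀ hψ
  choose Uf hUf using hchoice
  set W : S → Set (EuclideanSpace ℂ (Fin d)) :=
    fun ψ => (Uf ψ.1 ψ.2).symm ⁻¹' G with hW
  have hWopen : ∀ ψ : S, IsOpen (W ψ) :=
    fun ψ => hG.preimage (Uf ψ.1 ψ.2).symm.continuous
  have hWcover : S ⊆ ⋃ ψ : S, W ψ := by
    intro ψ hψ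
    refine Set.mem_iUnion.2 ⟨⟨ψ, hψ⟩, ?_⟩
    simp only [hW, Set.mem_preimage]
    have h : (Uf ψ hψ).symm ψ = ψ₀ := ((Uf ψ hψ).symm_apply_eq).2 (hUf ψ hψ).symm
    rw [h]
    exact hψ₀G
  obtain ⟨t, ht⟩ := hScompact.elim_finite_subcover W hWopen hWcover
  have hWmeas : ∀ ψ : S, μ (W ψ) = μ G := by
    intro ψ
    have h1 : μ (W ψ) = (Measure.map (⇑(Uf ψ.1 ψ.2)) μ) (W ψ) := by rw [hinv]
    rw [h1, Measure.map_apply (Uf ψ.1 ψ.2).continuous.measurable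
      ((hWopen ψ).measurableSet)]
    congr 1
    ext φ
    simp [hW, Set.mem_preimage, LinearIsometryEquiv.symm_apply_apply]
  by_contra hpos
  have hG0 : μ G = 0 := by
    simpa using hpos
  have : μ S ≤ ∑ ψ ∈ t, μ (W ψ) := le_trans (measure_mono ht) (measure_biUnion_finset_le t W)
  rw [hsph] at this
  simp [hWmeas, hG0] at this

lemma exists_interval {d : ℕ} (hd : 1 < d) (a : Fin d → ℝ) (r : ℝ)
    (h0 : a ⟨0, by omega⟩ ≤ r) (h1 : r ≤ a ⟨d - 1, by omega⟩)
    (hcon : ∀ k, ∀ h : k + 1 < d, a ⟨k, Nat.lt_of_succ_lt h⟩ ≤ r → r ≤ a ⟨k + 1, h⟩ → False) : False := by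
  have key : ∀ k, ∀ h : k < d, a ⟨k, h⟩ ≤ r := by
    intro k
    induction k with
    | zero => intro h; exact h0
    | succ n ih =>
      intro h
      have hn : n < d := by omega
      rcases le_or_gt (a ⟨n + 1, h⟩) r with h' | h'
      · exact h'
      · exact absurd (hcon n (by omega) (ih hn) (le_of_lt h')) (fun x => x)
  have h2 : a ⟨d - 2, by omega⟩ ≤ r := key _ (by omega)
  have h3 : (⟨d - 2 + 1, by omega⟩ : Fin d) = ⟨d - 1, by omega⟩ := by
    ext; simp; omega
  exact hcon (d - 2) (by omega) h2 (h3 ▸ h1)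

lemma sum_mem_F {d : ℕ} (hd : 1 < d) (a : Fin d → ℝ) (ha : StrictMono a)
    (p : Fin d → ℝ) (hp0 : ∀ i, 0 ≤ p i) (hp1 : ∑ i, p i = 1) (t : Fin d → Fin d) :
    ∃ k, ∃ h : k + 1 < d,
      a ⟨k, Nat.lt_of_succ_lt h⟩ ≤ ∑ i, p i * a (t i) ∧
      (∑ i, p i * a (t i)) ≤ a ⟨k + 1, h⟩ ∧
      (a ⟨k, Nat.lt_of_succ_lt h⟩ + a ⟨k + 1, h⟩) * (∑ i, p i * a (t i))
        - a ⟨k, Nat.lt_of_succ_lt h⟩ * a ⟨k + 1, h⟩ ≤ ∑ i, p i * (a (t i)) ^ 2 ∧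
      (∑ i, p i * (a (t i)) ^ 2) ≤ (a ⟨0, by omega⟩ + a ⟨d - 1, by omega⟩) * (∑ i, p i * a (t i))
        - a ⟨0, by omega⟩ * a ⟨d - 1, by omega⟩ := by
  set r := ∑ i, p i * a (t i) with hr
  set s := ∑ i, p i * (a (t i)) ^ 2 with hs
  have hmono := ha.monotone
  have hconst : ∀ c : ℝ, ∑ i : Fin d, p i * c = c := by
    intro c; rw [← Finset.sum_mul, hp1, one_mul]
  have hbound : ∀ (i0 : Fin d), (∀ i : Fin d, a i0 ≤ a i) → a i0 ≤ r := by
    intro i0 hle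
    calc a i0 = ∑ i, p i * a i0 := (hconst _).symm
    _ ≤ r := Finset.sum_le_sum fun i _ => mul_le_mul_of_nonneg_left (hle (t i)) (hp0 i)
  have hbound' : ∀ (i0 : Fin d), (∀ i : Fin d, a i ≤ a i0) → r ≤ a i0 := by
    intro i0 hle
    calc r ≤ ∑ i, p i * a i0 :=
      Finset.sum_le_sum fun i _ => mul_le_mul_of_nonneg_left (hle (t i)) (hp0 i)
    _ = a i0 := hconst _
  have h0 : a ⟨0, by omega⟩ ≤ r := hbound _ fun i => hmono (by simp [Fin.le_def])
  have h1 : r ≤ a ⟨d - 1, by omega⟩ := hbound' _ fun i => hmono (by simp [Fin.le_def]; omega)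
  by_contra hcon
  push_neg at hcon
  apply exists_interval hd a r h0 h1
  intro k h hk hk1
  have expand : ∀ x y : ℝ,
      s - ((x + y) * r - x * y) = ∑ i, p i * ((a (t i) - x) * (a (t i) - y)) := by
    intro x y
    have h1' : (x + y) * r = ∑ i, p i * ((x + y) * a (t i)) := by
      rw [hr, Finset.mul_sum]; exact Finset.sum_congr rfl fun i _ => by ring
    have h2' : x * y = ∑ i : Fin d, p i * (x * y) := (hconst _).symm
    rw [hs]
    conv_lhs => rw [h1', h2']
    rw [← Finset.sum_sub_distrib, ← Finset.sum_sub_distrib]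
    exact Finset.sum_congr rfl fun i _ => by ring
  set ak := a ⟨k, by omega⟩
  set ak1 := a ⟨k + 1, h⟩
  have low : 0 ≤ s - ((ak + ak1) * r - ak * ak1) := by
    rw [expand]
    refine Finset.sum_nonneg fun i _ => mul_nonneg (hp0 i) ?_
    rcases le_or_gt (t i).1 k with hle | hlt
    · have e1 : a (t i) ≤ ak := hmono (by simp [Fin.le_def]; omega)
      have e2 : a (t i) ≤ ak1 := hmono (by simp [Fin.le_def]; omega)
      nlinarith
    · have e1 : ak ≤ a (t i) := hmono (by simp [Fin.le_def]; omega)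
      have e2 : ak1 ≤ a (t i) := hmono (by simp [Fin.le_def]; omega)
      exact mul_nonneg (by linarith) (by linarith)
  have high : 0 ≤ ((a ⟨0, by omega⟩ + a ⟨d - 1, by omega⟩) * r
      - a ⟨0, by omega⟩ * a ⟨d - 1, by omega⟩) - s := by
    have hexp := expand (a ⟨0, by omega⟩) (a ⟨d - 1, by omega⟩)
    have hterm : ∀ i : Fin d,
        p i * ((a (t i) - a ⟨0, by omega⟩) * (a (t i) - a ⟨d - 1, by omega⟩)) ≤ 0 := by
      intro i
      have e1 : a ⟨0, by omega⟩ ≤ a (t i) := hmono (by simp [Fin.le_def])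
      have e2 : a (t i) ≤ a ⟨d - 1, by omega⟩ := hmono (by simp [Fin.le_def]; omega)
      exact mul_nonpos_of_nonneg_of_nonpos (hp0 i)
        (mul_nonpos_of_nonneg_of_nonpos (by linarith) (by linarith))
    have hsum : ∑ i, p i * ((a (t i) - a ⟨0, by omega⟩) * (a (t i) - a ⟨d - 1, by omega⟩)) ≤ 0 :=
      Finset.sum_nonpos fun i _ => hterm i
    linarith [hexp, hsum]
  have hlt := hcon k h hk hk1 (by linarith)
  linarith

lemma exists_weights {d : ℕ} (hd : 1 < d) (a : Fin d → ℝ) (ha : StrictMono a)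
    (k : ℕ) (h : k + 1 < d) (r s : ℝ)
    (h1 : a ⟨k, Nat.lt_of_succ_lt h⟩ ≤ r) (h2 : r ≤ a ⟨k + 1, h⟩)
    (h3 : (a ⟨k, Nat.lt_of_succ_lt h⟩ + a ⟨k + 1, h⟩) * r - a ⟨k, Nat.lt_of_succ_lt h⟩ * a ⟨k + 1, h⟩ ≤ s)
    (h4 : s ≤ (a ⟨0, by omega⟩ + a ⟨d - 1, by omega⟩) * r - a ⟨0, by omega⟩ * a ⟨d - 1, by omega⟩) :
    ∃ p : Fin d → ℝ, (∀ i, 0 ≤ p i) ∧ ∑ i, p i = 1 ∧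
      ∑ i, p i * a i = r ∧ ∑ i, p i * (a i) ^ 2 = s := by
  set i1 : Fin d := ⟨k, by omega⟩ with hi1
  set i2 : Fin d := ⟨k + 1, h⟩ with hi2
  set i3 : Fin d := ⟨0, by omega⟩ with hi3
  set i4 : Fin d := ⟨d - 1, by omega⟩ with hi4
  set x := a i1 with hx; set y := a i2 with hy
  set x' := a i3 with hx'; set y' := a i4 with hy'
  have hxy : x < y := ha (by simp [hi1, hi2, Fin.lt_def])
  have hxy' : x' < y' := ha (by simp [hi3, hi4, Fin.lt_def]; omega)
  have hx'x : x' ≤ x := (ha.monotone (by simp [hi1, hi3, Fin.le_def] : i3 ≤ i1))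
  have hyy' : y ≤ y' := (ha.monotone (by simp [hi2, hi4, Fin.le_def]; omega : i2 ≤ i4))
  set t := (r - x) / (y - x) with hti
  set t' := (r - x') / (y' - x') with ht'i
  set L := (x + y) * r - x * y with hL
  set H := (x' + y') * r - x' * y' with hH
  have hLs : L ≤ s := h3
  have hsH : s ≤ H := h4
  have hLH : L ≤ H := le_trans hLs hsH
  have ht0 : 0 ≤ t := div_nonneg (by linarith) (by linarith)
  have ht1 : t ≤ 1 := (div_le_one (by linarith)).2 (by linarith)
  have ht'0 : 0 ≤ t' := div_nonneg (by linarith) (by linarith)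
  have ht'1 : t' ≤ 1 := (div_le_one (by linarith)).2 (by linarith)
  set u := if H = L then (0 : ℝ) else (s - L) / (H - L) with hu
  have hu0 : 0 ≤ u := by
    rw [hu]; split
    · exact le_refl 0
    · rename_i hne
      have : L < H := lt_of_le_of_ne hLH (Ne.symm hne)
      exact div_nonneg (by linarith) (by linarith)
  have hu1 : u ≤ 1 := by
    rw [hu]; split
    · exact zero_le_one
    · rename_i hne
      have : L < H := lt_of_le_of_ne hLH (Ne.symm hne)
      exact (div_le_one (by linarith)).2 (by linarith)
  have huLH : (1 - u) * L + u * H = s := by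
    rw [hu]; split
    · rename_i heq
      have : L = s := le_antisymm hLs (heq ▸ hsH)
      simp [← this]
    · rename_i hne
      have hpos : L < H := lt_of_le_of_ne hLH (Ne.symm hne)
      have hne' : H - L ≠ 0 := by linarith
      field_simp [hne']
      ring
  have hyx : y - x ≠ 0 := sub_ne_zero.2 (ne_of_lt hxy).symm
  have hyx' : y' - x' ≠ 0 := sub_ne_zero.2 (ne_of_lt hxy').symm
  have htx : (1 - t) * x + t * y = r := by
    rw [hti]; field_simp [hyx]; ring
  have htx2 : (1 - t) * x ^ 2 + t * y ^ 2 = L := by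
    rw [hti, hL]; field_simp [hyx]; ring
  have ht'x : (1 - t') * x' + t' * y' = r := by
    rw [ht'i]; field_simp [hyx']; ring
  have ht'x2 : (1 - t') * x' ^ 2 + t' * y' ^ 2 = H := by
    rw [ht'i, hH]; field_simp [hyx']; ring
  classical
  set p : Fin d → ℝ := fun i =>
    (1 - u) * ((1 - t) * (if i = i1 then 1 else 0) + t * (if i = i2 then 1 else 0))
    + u * ((1 - t') * (if i = i3 then 1 else 0) + t' * (if i = i4 then 1 else 0)) with hp
  have key : ∀ f : Fin d → ℝ, ∑ i, p i * f i =
      (1 - u) * ((1 - t) * f i1 + t * f i2) + u * ((1 - t') * f i3 + t' * f i4) := by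
    intro f
    have hterm : ∀ i, p i * f i =
        (1 - u) * (1 - t) * ((if i = i1 then 1 else 0) * f i)
        + (1 - u) * t * ((if i = i2 then 1 else 0) * f i)
        + u * (1 - t') * ((if i = i3 then 1 else 0) * f i)
        + u * t' * ((if i = i4 then 1 else 0) * f i) := by
      intro i; rw [hp]; ring
    rw [Finset.sum_congr rfl fun i _ => hterm i]
    simp only [Finset.sum_add_distrib, ← Finset.mul_sum, ite_mul, one_mul, zero_mul]
    rw [Finset.sum_ite_eq' Finset.univ i1 f, Finset.sum_ite_eq' Finset.univ i2 f,
      Finset.sum_ite_eq' Finset.univ i3 f, Finset.sum_ite_eq' Finset.univ i4 f]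
    simp only [Finset.mem_univ, if_true]
    ring
  refine ⟨p, ?_, ?_, ?_, ?_⟩
  · intro i
    rw [hp]
    have hind : ∀ j : Fin d, (0:ℝ) ≤ if i = j then 1 else 0 := by
      intro j; split <;> norm_num
    refine add_nonneg (mul_nonneg (by linarith) (add_nonneg (mul_nonneg (by linarith) (hind i1))
      (mul_nonneg ht0 (hind i2))))
      (mul_nonneg hu0 (add_nonneg (mul_nonneg (by linarith) (hind i3))
      (mul_nonneg ht'0 (hind i4))))
  · calc ∑ i, p i = ∑ i, p i * 1 := by simp
    _ = 1 := by rw [key]; ring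
  · rw [key, htx, ht'x]; ring
  · rw [key (fun i => (a i) ^ 2)]
    show (1 - u) * ((1 - t) * x ^ 2 + t * y ^ 2) + u * ((1 - t') * x' ^ 2 + t' * y' ^ 2) = s
    rw [htx2, ht'x2, huLH]

lemma sum_norm_repr {d : ℕ} (b : OrthonormalBasis (Fin d) ℂ (EuclideanSpace ℂ (Fin d)))
    (ψ : EuclideanSpace ℂ (Fin d)) : ∑ i, ‖b.repr ψ i‖ ^ 2 = ‖ψ‖ ^ 2 := by
  have h1 : ‖b.repr ψ‖ = ‖ψ‖ := b.repr.norm_map ψ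
  have h2 : ‖b.repr ψ‖ = Real.sqrt (∑ i, ‖b.repr ψ i‖ ^ 2) := by
    rw [EuclideanSpace.norm_eq]
  rw [← h1, h2, Real.sq_sqrt (Finset.sum_nonneg fun i _ => sq_nonneg _)]

lemma exists_unit_of_weights {d : ℕ} (b : OrthonormalBasis (Fin d) ℂ (EuclideanSpace ℂ (Fin d)))
    (p : Fin d → ℝ) (hp0 : ∀ i, 0 ≤ p i) (hp1 : ∑ i, p i = 1) :
    ∃ ψ : EuclideanSpace ℂ (Fin d), ‖ψ‖ = 1 ∧ ∀ i, ‖b.repr ψ i‖ ^ 2 = p i := by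
  set v : EuclideanSpace ℂ (Fin d) := WithLp.toLp 2 (fun i => (Real.sqrt (p i) : ℂ)) with hv
  refine ⟨b.repr.symm v, ?_, ?_⟩
  · have hnv : ∀ i, ‖v i‖ ^ 2 = p i := by
      intro i
      simp [hv, Complex.norm_real, abs_of_nonneg (Real.sqrt_nonneg _),
        Real.sq_sqrt (hp0 i)]
    have : ‖v‖ = 1 := by
      rw [EuclideanSpace.norm_eq]
      simp only [hnv]
      rw [hp1, Real.sqrt_one]
    rw [LinearIsometryEquiv.norm_map, this]
  · intro i
    rw [LinearIsometryEquiv.apply_symm_apply]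
    simp [hv, Complex.norm_real, abs_of_nonneg (Real.sqrt_nonneg _), Real.sq_sqrt (hp0 i)]

/-- For a Hermitian `d×d` matrix `A` (`d ≥ 2`) with eigenvalues
`a 0 < ⋯ < a (d−1)`, the support (i.e. the smallest closed set of full measure) of the
pushforward of the Haar measure on the unit sphere of `ℂ^d` under `ψ ↦ (⟨A⟩_ψ, ⟨A²⟩_ψ)`
equals `⋃ₖ F_{k,k+1}`, and the support of the pushforward under `ψ ↦ (⟨A⟩_ψ, Δ_ψA)` equals
`⋃ₖ V_{k,k+1}`, with `F_{k,k+1}` and `V_{k,k+1}` as in the statement. -/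
theorem stmt_18 (d : ℕ) (hd : 2 ≤ d)
    (A : Matrix (Fin d) (Fin d) ℂ) (hA : A.IsHermitian)
    (a : Fin d → ℝ) (ha : StrictMono a)
    (hspec : spectrum ℂ A = Set.range (fun i => (a i : ℂ)))
    [MeasurableSpace (EuclideanSpace ℂ (Fin d))] [BorelSpace (EuclideanSpace ℂ (Fin d))]
    (μ : Measure (EuclideanSpace ℂ (Fin d))) [IsProbabilityMeasure μ]
    (hsph : μ {ψ | ‖ψ‖ = 1} = 1)
    (hinv : ∀ U : EuclideanSpace ℂ (Fin d) ≃ₗᵢ[ℂ] EuclideanSpace ℂ (Fin d),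
      Measure.map (⇑U) μ = μ)
    (ν₁ ν₂ : Measure (ℝ × ℝ))
    (hν₁ : ν₁ = Measure.map (fun ψ => (expVal A ψ, expVal (A * A) ψ)) μ)
    (hν₂ : ν₂ = Measure.map (fun ψ => (expVal A ψ, devPure A ψ)) μ)
    (F V : Set (ℝ × ℝ))
    (hF : F = ⋃ (k : ℕ) (h : k + 1 < d),
      {p : ℝ × ℝ | a ⟨k, by omega⟩ ≤ p.1 ∧ p.1 ≤ a ⟨k + 1, h⟩ ∧
        (a ⟨k, by omega⟩ + a ⟨k + 1, h⟩) * p.1 - a ⟨k, by omega⟩ * a ⟨k + 1, h⟩ ≤ p.2 ∧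
        p.2 ≤ (a ⟨0, by omega⟩ + a ⟨d - 1, by omega⟩) * p.1
                - a ⟨0, by omega⟩ * a ⟨d - 1, by omega⟩})
    (hV : V = ⋃ (k : ℕ) (h : k + 1 < d),
      {p : ℝ × ℝ | a ⟨k, by omega⟩ ≤ p.1 ∧ p.1 ≤ a ⟨k + 1, h⟩ ∧
        Real.sqrt ((a ⟨k + 1, h⟩ - p.1) * (p.1 - a ⟨k, by omega⟩)) ≤ p.2 ∧
        p.2 ≤ Real.sqrt ((a ⟨d - 1, by omega⟩ - p.1) * (p.1 - a ⟨0, by omega⟩))}) :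
    (IsClosed F ∧ ν₁ Fᶜ = 0 ∧ ∀ C : Set (ℝ × ℝ), IsClosed C → ν₁ Cᶜ = 0 → F ⊆ C) ∧
    (IsClosed V ∧ ν₂ Vᶜ = 0 ∧ ∀ C : Set (ℝ × ℝ), IsClosed C → ν₂ Cᶜ = 0 → V ⊆ C) := by
  classical
  -- continuity of the two maps
  set f : EuclideanSpace ℂ (Fin d) → ℝ × ℝ := fun ψ => (expVal A ψ, expVal (A * A) ψ) with hf
  set g : EuclideanSpace ℂ (Fin d) → ℝ × ℝ := fun ψ => (expVal A ψ, devPure A ψ) with hg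
  have hfc : Continuous f := (continuous_expVal A).prodMk (continuous_expVal (A * A))
  have hgc : Continuous g := by
    refine (continuous_expVal A).prodMk ?_
    unfold devPure
    exact Real.continuous_sqrt.comp ((continuous_expVal (A * A)).sub
      ((continuous_expVal A).pow 2))
  -- eigen data
  set b := hA.eigenvectorBasis with hb
  set ev := hA.eigenvalues with hev_def
  have hev : ∀ i j, (A.mulVec (fun x => b i x)) j = ((ev i : ℝ) : ℂ) * b i j := by
    intro i j
    have h := congrFun (hA.mulVec_eigenvectorBasis i) j
    simpa [Complex.real_smul] using h
  have hevfun : ∀ i, A.mulVec (fun x => b i x) = ((ev i : ℝ) : ℂ) • (fun x => b i x) :=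
    fun i => funext fun j => by rw [hev i j]; rfl
  have hev2 : ∀ i j, ((A * A).mulVec (fun x => b i x)) j = (((ev i ^ 2 : ℝ)) : ℂ) * b i j := by
    intro i j
    have h1 : (A * A).mulVec (fun x => b i x) = A.mulVec (A.mulVec (fun x => b i x)) :=
      (Matrix.mulVec_mulVec _ A A).symm
    rw [h1, hevfun i, Matrix.mulVec_smul, hevfun i, smul_smul]
    show ((ev i : ℂ) * (ev i : ℂ)) * b i j = _
    push_cast
    ring
  have hEA : ∀ ψ, expVal A ψ = ∑ i, ev i * ‖b.repr ψ i‖ ^ 2 :=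
    expVal_eq_sum A b ev hev
  have hEA2 : ∀ ψ, expVal (A * A) ψ = ∑ i, ev i ^ 2 * ‖b.repr ψ i‖ ^ 2 :=
    expVal_eq_sum (A * A) b (fun i => ev i ^ 2) hev2
  -- spectrum identification
  have hrange : Set.range ev = Set.range a := by
    have h1 : spectrum ℝ A = Set.range ev := hA.spectrum_real_eq_range_eigenvalues
    ext x
    constructor
    · intro hx
      have hx' : x ∈ spectrum ℝ A := h1 ▸ hx
      have hx'' : ((x : ℝ) : ℂ) ∈ spectrum ℂ A := by
        have := (spectrum.algebraMap_mem_iff ℂ).2 hx'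
        rwa [Complex.coe_algebraMap] at this
      rw [hspec] at hx''
      obtain ⟨i, hi⟩ := hx''
      refine ⟨i, ?_⟩
      have : (a i : ℂ) = (x : ℂ) := by simpa using hi
      exact_mod_cast this
    · intro hx
      obtain ⟨i, hi⟩ := hx
      have : (x : ℂ) ∈ spectrum ℂ A := by
        rw [hspec]; exact ⟨i, by simp [hi]⟩
      have hx' : x ∈ spectrum ℝ A := by
        refine (spectrum.algebraMap_mem_iff ℂ).1 ?_
        rw [Complex.coe_algebraMap]
        exact this
      rw [h1] at hx'
      exact hx'
  have hτ : ∀ j : Fin d, ∃ i, ev i = a j := by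
    intro j
    have : a j ∈ Set.range ev := hrange.symm ▸ Set.mem_range_self j
    exact this
  choose τ hτ' using hτ
  have hτinj : Function.Injective τ := by
    intro j j' hjj
    have : a j = a j' := by rw [← hτ' j, ← hτ' j', hjj]
    exact ha.injective this
  have hτbij : Function.Bijective τ := (Finite.injective_iff_bijective).1 hτinj
  set e : Fin d ≃ Fin d := Equiv.ofBijective τ hτbij with he
  have he_app : ∀ j, e j = τ j := fun j => rfl
  have hesymm : ∀ j, e.symm (τ j) = j := fun j => by
    rw [← he_app, Equiv.symm_apply_apply]
  have hσ : ∀ i : Fin d, ∃ j, a j = ev i := by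
    intro i
    have : ev i ∈ Set.range a := hrange ▸ Set.mem_range_self i
    exact this
  choose σ hσ' using hσ
  -- core existence: realizing any point of a face
  have hFexists : ∀ (k : ℕ) (h : k + 1 < d) (r s : ℝ),
      a ⟨k, by omega⟩ ≤ r → r ≤ a ⟨k + 1, h⟩ →
      (a ⟨k, by omega⟩ + a ⟨k + 1, h⟩) * r - a ⟨k, by omega⟩ * a ⟨k + 1, h⟩ ≤ s →
      s ≤ (a ⟨0, by omega⟩ + a ⟨d - 1, by omega⟩) * r - a ⟨0, by omega⟩ * a ⟨d - 1, by omega⟩ →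
      ∃ ψ, ‖ψ‖ = 1 ∧ expVal A ψ = r ∧ expVal (A * A) ψ = s := by
    intro k h r s c1 c2 c3 c4
    obtain ⟨p, hp0, hp1, hpa, hpa2⟩ := exists_weights hd a ha k h r s c1 c2 c3 c4
    set q : Fin d → ℝ := fun i => p (e.symm i) with hq
    have hq0 : ∀ i, 0 ≤ q i := fun i => hp0 _
    have hq1 : ∑ i, q i = 1 := by
      rw [← Equiv.sum_comp e q]
      simpa [hq] using hp1
    obtain ⟨ψ, hψn, hψr⟩ := exists_unit_of_weights b q hq0 hq1
    refine ⟨ψ, hψn, ?_, ?_⟩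
    · rw [hEA]
      have : ∑ i, ev i * ‖b.repr ψ i‖ ^ 2 = ∑ i, ev i * q i :=
        Finset.sum_congr rfl fun i _ => by rw [hψr i]
      rw [this, ← Equiv.sum_comp e (fun i => ev i * q i)]
      have : ∀ j, ev (e j) * q (e j) = p j * a j := by
        intro j
        rw [he_app, hτ' j, hq]
        show a j * p (e.symm (τ j)) = p j * a j
        rw [hesymm j, mul_comm]
      rw [Finset.sum_congr rfl fun j _ => this j]
      exact hpa
    · rw [hEA2]
      have : ∑ i, ev i ^ 2 * ‖b.repr ψ i‖ ^ 2 = ∑ i, ev i ^ 2 * q i :=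
        Finset.sum_congr rfl fun i _ => by rw [hψr i]
      rw [this, ← Equiv.sum_comp e (fun i => ev i ^ 2 * q i)]
      have : ∀ j, ev (e j) ^ 2 * q (e j) = p j * (a j) ^ 2 := by
        intro j
        rw [he_app, hτ' j, hq]
        show a j ^ 2 * p (e.symm (τ j)) = p j * a j ^ 2
        rw [hesymm j, mul_comm]
      rw [Finset.sum_congr rfl fun j _ => this j]
      exact hpa2
  -- core membership: values of a unit vector lie in some face
  have hFmem : ∀ ψ : EuclideanSpace ℂ (Fin d), ‖ψ‖ = 1 →
      ∃ k, ∃ h : k + 1 < d,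
        a ⟨k, by omega⟩ ≤ expVal A ψ ∧ expVal A ψ ≤ a ⟨k + 1, h⟩ ∧
        (a ⟨k, by omega⟩ + a ⟨k + 1, h⟩) * expVal A ψ
          - a ⟨k, by omega⟩ * a ⟨k + 1, h⟩ ≤ expVal (A * A) ψ ∧
        expVal (A * A) ψ ≤ (a ⟨0, by omega⟩ + a ⟨d - 1, by omega⟩) * expVal A ψ
          - a ⟨0, by omega⟩ * a ⟨d - 1, by omega⟩ := by
    intro ψ hψ
    set p : Fin d → ℝ := fun i => ‖b.repr ψ i‖ ^ 2 with hp
    have hp0 : ∀ i, 0 ≤ p i := fun i => sq_nonneg _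
    have hp1 : ∑ i, p i = 1 := by
      rw [hp]
      simp only []
      rw [sum_norm_repr b ψ, hψ]
      norm_num
    have hr : expVal A ψ = ∑ i, p i * a (σ i) := by
      rw [hEA]
      exact Finset.sum_congr rfl fun i _ => by rw [hσ' i, mul_comm]
    have hs : expVal (A * A) ψ = ∑ i, p i * (a (σ i)) ^ 2 := by
      rw [hEA2]
      exact Finset.sum_congr rfl fun i _ => by rw [hσ' i, mul_comm]
    obtain ⟨k, h, c1, c2, c3, c4⟩ := sum_mem_F hd a ha p hp0 hp1 σ
    exact ⟨k, h, by rw [hr]; exact c1, by rw [hr]; exact c2,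
      by rw [hr, hs]; exact c3, by rw [hr, hs]; exact c4⟩
  -- characterization of F as the image of the unit sphere
  have hFiff : ∀ q : ℝ × ℝ, q ∈ F ↔ ∃ ψ, ‖ψ‖ = 1 ∧ f ψ = q := by
    intro q
    constructor
    · intro hq
      rw [hF] at hq
      simp only [Set.mem_iUnion, Set.mem_setOf_eq] at hq
      obtain ⟨k, h, c1, c2, c3, c4⟩ := hq
      obtain ⟨ψ, hψ, h1, h2⟩ := hFexists k h q.1 q.2 c1 c2 c3 c4
      refine ⟨ψ, hψ, ?_⟩
      rw [hf]
      simp only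
      rw [h1, h2]
    · rintro ⟨ψ, hψ, rfl⟩
      obtain ⟨k, h, c1, c2, c3, c4⟩ := hFmem ψ hψ
      rw [hF]
      simp only [Set.mem_iUnion, Set.mem_setOf_eq]
      exact ⟨k, h, c1, c2, c3, c4⟩
  -- characterization of V as the image of the unit sphere
  have hViff : ∀ q : ℝ × ℝ, q ∈ V ↔ ∃ ψ, ‖ψ‖ = 1 ∧ g ψ = q := by
    intro q
    constructor
    · intro hq
      rw [hV] at hq
      simp only [Set.mem_iUnion, Set.mem_setOf_eq] at hq
      obtain ⟨k, h, c1, c2, c3, c4⟩ := hq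
      have hx0 : 0 ≤ q.2 := le_trans (Real.sqrt_nonneg _) c3
      have hprod : 0 ≤ (a ⟨k + 1, h⟩ - q.1) * (q.1 - a ⟨k, by omega⟩) :=
        mul_nonneg (by linarith) (by linarith)
      have ha0k : a ⟨0, by omega⟩ ≤ a ⟨k, by omega⟩ := ha.monotone (by simp [Fin.le_def])
      have haDk : a ⟨k + 1, h⟩ ≤ a ⟨d - 1, by omega⟩ := ha.monotone (by simp [Fin.le_def]; omega)
      have hT : 0 ≤ (a ⟨d - 1, by omega⟩ - q.1) * (q.1 - a ⟨0, by omega⟩) :=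
        mul_nonneg (by linarith) (by linarith)
      have h1 : (a ⟨k + 1, h⟩ - q.1) * (q.1 - a ⟨k, by omega⟩) ≤ q.2 ^ 2 := by
        have hs := Real.sq_sqrt hprod
        have hp := pow_le_pow_left₀ (Real.sqrt_nonneg _) c3 2
        nlinarith
      have h2 : q.2 ^ 2 ≤ (a ⟨d - 1, by omega⟩ - q.1) * (q.1 - a ⟨0, by omega⟩) := by
        have hs := Real.sq_sqrt hT
        have hp := pow_le_pow_left₀ hx0 c4 2
        nlinarith
      have hlow : (a ⟨k, by omega⟩ + a ⟨k + 1, h⟩) * q.1 - a ⟨k, by omega⟩ * a ⟨k + 1, h⟩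
          ≤ q.1 ^ 2 + q.2 ^ 2 := by nlinarith
      have hhigh : q.1 ^ 2 + q.2 ^ 2 ≤ (a ⟨0, by omega⟩ + a ⟨d - 1, by omega⟩) * q.1
          - a ⟨0, by omega⟩ * a ⟨d - 1, by omega⟩ := by nlinarith
      obtain ⟨ψ, hψ, e1, e2⟩ := hFexists k h q.1 (q.1 ^ 2 + q.2 ^ 2) c1 c2 hlow hhigh
      refine ⟨ψ, hψ, ?_⟩
      have hdev : devPure A ψ = q.2 := by
        unfold devPure
        rw [e1, e2]
        rw [show q.1 ^ 2 + q.2 ^ 2 - q.1 ^ 2 = q.2 ^ 2 by ring]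
        exact Real.sqrt_sq hx0
      rw [hg]
      simp only
      rw [e1, hdev]
    · rintro ⟨ψ, hψ, rfl⟩
      obtain ⟨k, h, c1, c2, c3, c4⟩ := hFmem ψ hψ
      rw [hV]
      simp only [Set.mem_iUnion, Set.mem_setOf_eq]
      refine ⟨k, h, c1, c2, ?_, ?_⟩
      · show Real.sqrt _ ≤ devPure A ψ
        unfold devPure
        exact Real.sqrt_le_sqrt (by nlinarith)
      · show devPure A ψ ≤ Real.sqrt _
        unfold devPure
        exact Real.sqrt_le_sqrt (by nlinarith)
  -- closedness
  have hFpiece : ∀ x y x' y' : ℝ, IsClosed {p : ℝ × ℝ | x ≤ p.1 ∧ p.1 ≤ y ∧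
      (x + y) * p.1 - x * y ≤ p.2 ∧ p.2 ≤ (x' + y') * p.1 - x' * y'} := by
    intro x y x' y'
    simp only [Set.setOf_and]
    refine IsClosed.inter (isClosed_le continuous_const continuous_fst)
      (IsClosed.inter (isClosed_le continuous_fst continuous_const)
        (IsClosed.inter (isClosed_le (by fun_prop) continuous_snd)
          (isClosed_le continuous_snd (by fun_prop))))
  have hVpiece : ∀ x y x' y' : ℝ, IsClosed {p : ℝ × ℝ | x ≤ p.1 ∧ p.1 ≤ y ∧
      Real.sqrt ((y - p.1) * (p.1 - x)) ≤ p.2 ∧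
      p.2 ≤ Real.sqrt ((y' - p.1) * (p.1 - x'))} := by
    intro x y x' y'
    simp only [Set.setOf_and]
    refine IsClosed.inter (isClosed_le continuous_const continuous_fst)
      (IsClosed.inter (isClosed_le continuous_fst continuous_const)
        (IsClosed.inter (isClosed_le (Real.continuous_sqrt.comp (by fun_prop)) continuous_snd)
          (isClosed_le continuous_snd (Real.continuous_sqrt.comp (by fun_prop)))))
  set ak : ℕ → ℝ := fun k => if h : k < d then a ⟨k, h⟩ else 0 with hak
  have hSa : ∀ k (h : k < d), ak k = a ⟨k, h⟩ := fun k h => dif_pos h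
  have hFclosed : IsClosed F := by
    have hFeq : F = ⋃ k ∈ Finset.range (d - 1), {p : ℝ × ℝ | ak k ≤ p.1 ∧ p.1 ≤ ak (k + 1) ∧
        (ak k + ak (k + 1)) * p.1 - ak k * ak (k + 1) ≤ p.2 ∧
        p.2 ≤ (ak 0 + ak (d - 1)) * p.1 - ak 0 * ak (d - 1)} := by
      rw [hF]
      ext q
      simp only [Set.mem_iUnion, Set.mem_setOf_eq, Finset.mem_range]
      constructor
      · rintro ⟨k, h, c1, c2, c3, c4⟩
        refine ⟨k, by omega, ?_, ?_, ?_, ?_⟩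
        · rw [hSa k (by omega)]; exact c1
        · rw [hSa (k + 1) (by omega)]; exact c2
        · rw [hSa k (by omega), hSa (k + 1) (by omega)]; exact c3
        · rw [hSa 0 (by omega), hSa (d - 1) (by omega)]; exact c4
      · rintro ⟨k, hk, c1, c2, c3, c4⟩
        rw [hSa k (by omega)] at c1 c3
        rw [hSa (k + 1) (by omega)] at c2 c3
        rw [hSa 0 (by omega), hSa (d - 1) (by omega)] at c4
        exact ⟨k, by omega, c1, c2, c3, c4⟩
    rw [hFeq]
    exact isClosed_biUnion_finset fun k _ => hFpiece _ _ _ _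
  have hVclosed : IsClosed V := by
    have hVeq : V = ⋃ k ∈ Finset.range (d - 1), {p : ℝ × ℝ | ak k ≤ p.1 ∧ p.1 ≤ ak (k + 1) ∧
        Real.sqrt ((ak (k + 1) - p.1) * (p.1 - ak k)) ≤ p.2 ∧
        p.2 ≤ Real.sqrt ((ak (d - 1) - p.1) * (p.1 - ak 0))} := by
      rw [hV]
      ext q
      simp only [Set.mem_iUnion, Set.mem_setOf_eq, Finset.mem_range]
      constructor
      · rintro ⟨k, h, c1, c2, c3, c4⟩
        refine ⟨k, by omega, ?_, ?_, ?_, ?_⟩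
        · rw [hSa k (by omega)]; exact c1
        · rw [hSa (k + 1) (by omega)]; exact c2
        · rw [hSa k (by omega), hSa (k + 1) (by omega)]; exact c3
        · rw [hSa 0 (by omega), hSa (d - 1) (by omega)]; exact c4
      · rintro ⟨k, hk, c1, c2, c3, c4⟩
        rw [hSa k (by omega)] at c1 c3
        rw [hSa (k + 1) (by omega)] at c2 c3
        rw [hSa 0 (by omega), hSa (d - 1) (by omega)] at c4
        exact ⟨k, by omega, c1, c2, c3, c4⟩
    rw [hVeq]
    exact isClosed_biUnion_finset fun k _ => hVpiece _ _ _ _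
  -- measure-theoretic facts
  have hSclosed : IsClosed {ψ : EuclideanSpace ℂ (Fin d) | ‖ψ‖ = 1} :=
    isClosed_eq continuous_norm continuous_const
  have hScompl : μ {ψ : EuclideanSpace ℂ (Fin d) | ‖ψ‖ = 1}ᶜ = 0 := by
    have hc := measure_compl hSclosed.measurableSet (measure_ne_top μ _)
    rw [hsph, measure_univ] at hc
    simpa using hc
  have hnull : ∀ (h : EuclideanSpace ℂ (Fin d) → ℝ × ℝ), Continuous h →
      ∀ E : Set (ℝ × ℝ), IsClosed E → (∀ ψ, ‖ψ‖ = 1 → h ψ ∈ E) →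
      Measure.map h μ Eᶜ = 0 := by
    intro h hc E hE hin
    rw [Measure.map_apply hc.measurable hE.measurableSet.compl]
    have hsub : h ⁻¹' Eᶜ ⊆ {ψ : EuclideanSpace ℂ (Fin d) | ‖ψ‖ = 1}ᶜ :=
      fun ψ hmem hs => hmem (hin ψ hs)
    exact le_antisymm (le_trans (measure_mono hsub) hScompl.le) (by simp)
  have hmin : ∀ (h : EuclideanSpace ℂ (Fin d) → ℝ × ℝ), Continuous h →
      ∀ E : Set (ℝ × ℝ), (∀ q ∈ E, ∃ ψ, ‖ψ‖ = 1 ∧ h ψ = q) →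
      ∀ C : Set (ℝ × ℝ), IsClosed C → Measure.map h μ Cᶜ = 0 → E ⊆ C := by
    intro h hc E hsurj C hC hnl q hq
    by_contra hqC
    obtain ⟨ψ, hψ, hhq⟩ := hsurj q hq
    have hopen : IsOpen (h ⁻¹' Cᶜ) := hC.isOpen_compl.preimage hc
    have hmemG : ψ ∈ h ⁻¹' Cᶜ := by rw [Set.mem_preimage, hhq]; exact hqC
    have hpos := open_pos (by omega) μ hsph hinv _ hopen ψ hmemG hψ
    rw [Measure.map_apply hc.measurable hC.measurableSet.compl] at hnl
    rw [hnl] at hpos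
    exact lt_irrefl 0 hpos
  refine ⟨⟨hFclosed, ?_, ?_⟩, hVclosed, ?_, ?_⟩
  · rw [hν₁]
    exact hnull f hfc F hFclosed fun ψ hψ => (hFiff (f ψ)).2 ⟨ψ, hψ, rfl⟩
  · intro C hC hCnull
    rw [hν₁] at hCnull
    exact hmin f hfc F (fun q hq => (hFiff q).1 hq) C hC hCnull
  · rw [hν₂]
    exact hnull g hgc V hVclosed fun ψ hψ => (hViff (g ψ)).2 ⟨ψ, hψ, rfl⟩
  · intro C hC hCnull
    rw [hν₂] at hCnull
    exact hmin g hgc V (fun q hq => (hViff q).1 hq) C hC hCnull
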